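/- Let p < q be real numbers and let G = {w ∈ ℍ : |w − (p+q)/2| = (q−p)/2} be the hyperbolic geodesic of the upper half-plane with endpoints p and q (a Euclidean semicircle). Then for every z ∈ ℍ, the hyperbolic distance d from z to G (the infimum of the hyperbolic distances from z to points of G) satisfies cosh d = |z − p|·|z − q| / ((q − p)·Im z). -/

import Mathlib

open Complex MeasureTheory

set_option maxHeartbeats 1000000 in
/-- For the hyperbolic geodesic `G = {w ∈ ℍ : |w − (p+q)/2| = (q−p)/2}` of the upper
half-plane with endpoints `p < q`, the hyperbolic distance `d` from `z ∈ ℍ` to `G`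
satisfies `cosh d = |z − p|·|z − q| / ((q − p)·Im z)`. -/
theorem stmt1 (p q : ℝ) (hpq : p < q) (z : UpperHalfPlane) :
    Real.cosh (Metric.infDist z
        {w : UpperHalfPlane | ‖(w : ℂ) - (((p : ℂ) + q) / 2)‖ = (q - p) / 2}) =
      ‖(z : ℂ) - p‖ * ‖(z : ℂ) - q‖ / ((q - p) * (z : ℂ).im) := by
  set G : Set UpperHalfPlane :=
    {w : UpperHalfPlane | ‖(w : ℂ) - (((p : ℂ) + q) / 2)‖ = (q - p) / 2} with hG
  set c : ℝ := (p + q) / 2 with hc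
  set r : ℝ := (q - p) / 2 with hrdef
  have hr : 0 < r := by rw [hrdef]; linarith
  set a : ℝ := (z : ℂ).re - c with ha
  have hb : 0 < (z : ℂ).im := z.im_pos
  set b : ℝ := (z : ℂ).im with hbdef
  set S : ℝ := a ^ 2 + b ^ 2 + r ^ 2 with hS
  have hSpos : 0 < S := by positivity
  set T : ℝ := ((a + r) ^ 2 + b ^ 2) * ((a - r) ^ 2 + b ^ 2) with hT
  have hTpos : 0 < T := by positivity
  have hTS : T = S ^ 2 - 4 * a ^ 2 * r ^ 2 := by rw [hT, hS]; ring
  set t : ℝ := Real.sqrt T with ht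
  have htpos : 0 < t := Real.sqrt_pos.2 hTpos
  have ht2 : t ^ 2 = T := Real.sq_sqrt hTpos.le
  have hcre : ((((p : ℂ) + q) / 2)).re = c := by simp [hc]
  have hcim : ((((p : ℂ) + q) / 2)).im = 0 := by simp
  have hzim : z.im = b := rfl
  clear_value c r a b S T t
  -- abs = r in coordinates
  have key : ∀ x : ℂ, ‖x‖ = r ↔ x.re ^ 2 + x.im ^ 2 = r ^ 2 := by
    intro x
    constructor
    · intro h
      rw [← h, Complex.sq_norm, Complex.normSq_apply]; ring
    · intro h
      rw [Complex.norm_def, show Complex.normSq x = r ^ 2 by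
        rw [Complex.normSq_apply]; nlinarith [h], Real.sqrt_sq hr.le]
  have hmem : ∀ w : UpperHalfPlane, w ∈ G ↔
      ((w : ℂ).re - c) ^ 2 + (w : ℂ).im ^ 2 = r ^ 2 := by
    intro w
    rw [hG]
    simp only [Set.mem_setOf_eq, key, Complex.sub_re, Complex.sub_im, hcre, hcim, sub_zero]
  -- the foot of the perpendicular
  have hv0 : (0 : ℝ) < r * t / S := by positivity
  set w0 : UpperHalfPlane := ⟨⟨c + 2 * r ^ 2 * a / S, r * t / S⟩, hv0⟩ with hw0
  have hw0re : (w0 : ℂ).re = c + 2 * r ^ 2 * a / S := rfl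
  have hw0im : (w0 : ℂ).im = r * t / S := rfl
  have hw0G : w0 ∈ G := by
    rw [hmem, hw0re, hw0im]
    have h1 : c + 2 * r ^ 2 * a / S - c = 2 * r ^ 2 * a / S := by ring
    rw [h1]
    field_simp
    linear_combination ht2 + hTS
  -- value of cosh dist at w0
  have hcosh0 : Real.cosh (dist z w0) = t / (2 * b * r) := by
    rw [UpperHalfPlane.cosh_dist, Complex.dist_eq]
    rw [show ‖(z : ℂ) - (w0 : ℂ)‖ ^ 2
        = ((z : ℂ).re - (w0 : ℂ).re) ^ 2 + ((z : ℂ).im - (w0 : ℂ).im) ^ 2 by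
      rw [Complex.sq_norm, Complex.normSq_apply, Complex.sub_re, Complex.sub_im]; ring]
    rw [hw0re, hw0im, hzim, show w0.im = r * t / S from rfl, ← hbdef]
    have hzre : (z : ℂ).re = a + c := by rw [ha]; ring
    rw [hzre]
    have h1 : a + c - (c + 2 * r ^ 2 * a / S) = a * (S - 2 * r ^ 2) / S := by
      field_simp; ring
    have hB : b - r * t / S = (b * S - r * t) / S := by field_simp
    rw [h1, hB]
    have key0 : a ^ 2 * (S - 2 * r ^ 2) ^ 2 + (b * S - r * t) ^ 2
        = S * t ^ 2 - 2 * b * r * t * S := by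
      linear_combination (r ^ 2 - S) * ht2 + (r ^ 2 - S) * hTS - S ^ 2 * hS
    have hN : (a * (S - 2 * r ^ 2) / S) ^ 2 + ((b * S - r * t) / S) ^ 2
        = (S * t ^ 2 - 2 * b * r * t * S) / S ^ 2 := by
      rw [div_pow, div_pow, ← add_div, mul_pow, ← key0]
    rw [hN]
    field_simp
    ring
  -- lower bound for all points of G
  have hlow : ∀ w ∈ G, dist z w0 ≤ dist z w := by
    intro w hw
    have hw' := (hmem w).1 hw
    have hwim : 0 < (w : ℂ).im := w.im_pos
    have hcoshw : t / (2 * b * r) ≤ Real.cosh (dist z w) := by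
      rw [UpperHalfPlane.cosh_dist, Complex.dist_eq]
      rw [show ‖(z : ℂ) - (w : ℂ)‖ ^ 2
          = ((z : ℂ).re - (w : ℂ).re) ^ 2 + ((z : ℂ).im - (w : ℂ).im) ^ 2 by
        rw [Complex.sq_norm, Complex.normSq_apply, Complex.sub_re, Complex.sub_im]; ring]
      set u : ℝ := (w : ℂ).re - c with hu
      set v : ℝ := (w : ℂ).im with hv
      have huv : u ^ 2 + v ^ 2 = r ^ 2 := hw'
      have hvpos : 0 < v := hwim
      have hwre : (w : ℂ).re = u + c := by rw [hu]; ring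
      have hzre : (z : ℂ).re = a + c := by rw [ha]; ring
      rw [hwre, hzre, hzim, show w.im = v from rfl, ← hbdef]
      clear_value u v
      clear hw' hwre hwim hw
      have h2 : a + c - (u + c) = a - u := by ring
      rw [h2]
      have hkey : 2 * a * r * u + t * v ≤ r * S := by
        nlinarith [sq_nonneg (t * u - 2 * a * r * v), huv, mul_pos hr hSpos,
          sq_nonneg (r * S - 2 * a * r * u - t * v), sq_nonneg (r * S + 2 * a * r * u + t * v),
          mul_pos htpos hvpos]
      rw [div_le_iff₀ (by positivity)]
      rw [show (1 + ((a - u) ^ 2 + (b - v) ^ 2) / (2 * b * v)) * (2 * b * r)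
          = r * (2 * b * v + (a - u) ^ 2 + (b - v) ^ 2) / v by field_simp; ring]
      rw [le_div_iff₀ hvpos]
      nlinarith [hkey, huv]
    have h3 := Real.cosh_le_cosh.1 (hcosh0 ▸ hcoshw)
    rwa [_root_.abs_of_nonneg dist_nonneg, _root_.abs_of_nonneg dist_nonneg] at h3
  -- identify infDist
  have hinf : Metric.infDist z G = dist z w0 := by
    refine le_antisymm (Metric.infDist_le_dist_of_mem hw0G) ?_
    rw [Metric.infDist_eq_iInf]
    haveI : Nonempty G := ⟨⟨w0, hw0G⟩⟩
    exact le_ciInf fun w => hlow w w.2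
  rw [hinf, hcosh0]
  -- identify the right-hand side
  have habsp : ‖(z : ℂ) - p‖ ^ 2 = (a + r) ^ 2 + b ^ 2 := by
    rw [Complex.sq_norm, Complex.normSq_apply, Complex.sub_re, Complex.sub_im]
    rw [Complex.ofReal_re, Complex.ofReal_im, ← hbdef]
    have h4 : (z : ℂ).re - p = a + r := by rw [ha, hc, hrdef]; ring
    rw [h4]; ring
  have habsq : ‖(z : ℂ) - q‖ ^ 2 = (a - r) ^ 2 + b ^ 2 := by
    rw [Complex.sq_norm, Complex.normSq_apply, Complex.sub_re, Complex.sub_im]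
    rw [Complex.ofReal_re, Complex.ofReal_im, ← hbdef]
    have h4 : (z : ℂ).re - q = a - r := by rw [ha, hc, hrdef]; ring
    rw [h4]; ring
  have hprod : ‖(z : ℂ) - p‖ * ‖(z : ℂ) - q‖ = t := by
    have h1 : (‖(z : ℂ) - p‖ * ‖(z : ℂ) - q‖) ^ 2 = T := by
      rw [mul_pow, habsp, habsq, hT]
    have h2 : (0 : ℝ) ≤ ‖(z : ℂ) - p‖ * ‖(z : ℂ) - q‖ := by positivity
    rw [ht, ← h1, Real.sqrt_sq h2]
  rw [hprod, show q - p = 2 * r by rw [hrdef]; ring]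
  ring
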